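/- There exists an instance with two groups of agents of sizes 6 and 1, where all seven agents have binary valuations over a finite set G of goods, such that no allocation (B₁, B₂) of G to the two groups is EF1 for every agent. -/
import Mathlib


open Finset

variable {γ : Type*} [DecidableEq γ]

/-- An allocation is EF1 for an agent with valuation `u` whose group receives `mine`,
the other group receiving `other`. -/
def EF1 (u : Finset γ → ℝ) (mine other : Finset γ) : Prop :=
  ∃ B ⊆ other, B.card ≤ 1 ∧ u (other \ B) ≤ u mine

/-- A valuation is additive if the value of a set is the sum of values of its singletons. -/
def AdditiveVal (u : Finset γ → ℝ) : Prop :=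
  ∀ S : Finset γ, u S = ∑ g ∈ S, u {g}

/-- A valuation is binary if it is additive and each good has value 0 or 1. -/
def Binary (u : Finset γ → ℝ) : Prop :=
  AdditiveVal u ∧ ∀ g : γ, u {g} = 0 ∨ u {g} = 1

/-- The six "pair" sets over 4 goods. -/
def pairsA : Fin 6 → Finset (Fin 4) :=
  ![{0,1}, {0,2}, {0,3}, {1,2}, {1,3}, {2,3}]

lemma cardInter_binary (A : Finset γ) :
    Binary (fun S => (((S ∩ A).card : ℕ) : ℝ)) := by
  constructor
  · intro S
    push_cast
    rw [← Finset.filter_mem_eq_inter, Finset.card_filter]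
    push_cast
    refine Finset.sum_congr rfl fun g _ => ?_
    by_cases hg : g ∈ A
    · simp [Finset.singleton_inter_of_mem hg, hg]
    · simp [Finset.singleton_inter_of_notMem hg, hg]
  · intro g
    have h : ({g} ∩ A).card ≤ 1 := by
      calc ({g} ∩ A).card ≤ ({g} : Finset γ).card :=
        Finset.card_le_card Finset.inter_subset_left
      _ = 1 := Finset.card_singleton g
    interval_cases h' : ({g} ∩ A).card
    · left; simp [h']
    · right; simp [h']

lemma key : ∀ B₁ : Finset (Fin 4), B₁.card ≤ B₁ᶜ.card + 1 →
    ∃ j : Fin 6, (B₁ ∩ pairsA j).card + 2 ≤ (B₁ᶜ ∩ pairsA j).card := by decide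

/-- For groups of sizes (6,1) and binary valuations, an EF1 allocation
does not always exist. -/
theorem binary_6_1_no_EF1 :
    ∃ (m : ℕ) (u : Fin 6 → Finset (Fin m) → ℝ) (v : Finset (Fin m) → ℝ),
      (∀ j, Binary (u j)) ∧ Binary v ∧
      ∀ B₁ B₂ : Finset (Fin m), Disjoint B₁ B₂ → B₁ ∪ B₂ = Finset.univ →
        ¬ ((∀ j, EF1 (u j) B₁ B₂) ∧ EF1 v B₂ B₁) := by
  refine ⟨4, fun j S => (((S ∩ pairsA j).card : ℕ) : ℝ),
    fun S => ((S.card : ℕ) : ℝ), fun j => cardInter_binary _, ?_, ?_⟩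
  · have := cardInter_binary (A := (Finset.univ : Finset (Fin 4)))
    simpa using this
  · rintro B₁ B₂ hd hu ⟨h1, h2⟩
    have hB2 : B₂ = B₁ᶜ := by
      rw [Finset.compl_eq_univ_sdiff, ← hu, Finset.union_sdiff_cancel_left hd]
    subst hB2
    -- from h2 : B₁.card ≤ B₁ᶜ.card + 1
    obtain ⟨B, hBsub, hBcard, hle⟩ := h2
    simp only [] at hle
    have hle' : (B₁ \ B).card ≤ B₁ᶜ.card := by exact_mod_cast hle
    have hcard1 : B₁.card ≤ B₁ᶜ.card + 1 := by
      have : B₁.card ≤ (B₁ \ B).card + B.card := by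
        rw [Finset.card_sdiff_add_card_eq_card hBsub]
      omega
    obtain ⟨j, hj⟩ := key B₁ hcard1
    obtain ⟨C, hCsub, hCcard, hCle⟩ := h1 j
    simp only [] at hCle
    have hCle' : ((B₁ᶜ \ C) ∩ pairsA j).card ≤ (B₁ ∩ pairsA j).card := by
      exact_mod_cast hCle
    have hsub : B₁ᶜ ∩ pairsA j ⊆ ((B₁ᶜ \ C) ∩ pairsA j) ∪ C := by
      intro x hx
      simp only [Finset.mem_inter, Finset.mem_union, Finset.mem_sdiff] at hx ⊢
      by_cases hxC : x ∈ C
      · exact Or.inr hxC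
      · exact Or.inl ⟨⟨hx.1, hxC⟩, hx.2⟩
    have := Finset.card_le_card hsub
    have := Finset.card_union_le ((B₁ᶜ \ C) ∩ pairsA j) C
    omega
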